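/- For |x| < 1 (or as an identity of formal power series), the generating function of partitions satisfies ∏_{k=1}^∞ 1/(1-x^k) = Σ_{d=0}^∞ x^{d²} / ∏_{k=1}^d (1-x^k)². -/

import Mathlib

/-!
Durfee square identity: ∏_{k=1}^∞ 1/(1-x^k) = Σ_{d=0}^∞ x^{d²} / ∏_{k=1}^d (1-x^k)²,
as an identity of formal power series.  Since coefficients of degree ≤ n are unaffected
by the factors with k > n (each such factor is 1 + O(x^{n+1})) and by the terms with
d² > n, the identity of formal power series is expressed coefficientwise via the
partial products/sums up to n.
-/

open PowerSeries Finset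

namespace DurfeeAux

/-- Partial product `∏_{k=1}^m (1-x^k)`. -/
noncomputable def pq (m : ℕ) : PowerSeries ℚ :=
  ∏ k ∈ Finset.range m, (1 - (PowerSeries.X : PowerSeries ℚ) ^ (k + 1))

/-- Partial product `∏_{k=1}^m (1-x^k)⁻¹`. -/
noncomputable def pa (m : ℕ) : PowerSeries ℚ :=
  ∏ k ∈ Finset.range m, (1 - (PowerSeries.X : PowerSeries ℚ) ^ (k + 1))⁻¹

lemma const_factor (k : ℕ) :
    constantCoeff (R := ℚ) (1 - (PowerSeries.X : PowerSeries ℚ) ^ (k + 1)) ≠ 0 := by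
  simp [zero_pow]

lemma factor_mul_inv (k : ℕ) :
    (1 - (PowerSeries.X : PowerSeries ℚ) ^ (k + 1)) *
      (1 - (PowerSeries.X : PowerSeries ℚ) ^ (k + 1))⁻¹ = 1 :=
  PowerSeries.mul_inv_cancel _ (const_factor k)

lemma pq_mul_pa (m : ℕ) : pq m * pa m = 1 := by
  rw [pq, pa, ← Finset.prod_mul_distrib]
  exact Finset.prod_eq_one fun k _ => factor_mul_inv k

lemma pq_ne_zero (m : ℕ) : pq m ≠ 0 := by
  intro h
  have := pq_mul_pa m
  rw [h, zero_mul] at this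
  simp at this

lemma pq_succ (m : ℕ) :
    pq (m + 1) = pq m * (1 - (PowerSeries.X : PowerSeries ℚ) ^ (m + 1)) :=
  Finset.prod_range_succ _ _

lemma pa_succ (m : ℕ) :
    pa (m + 1) = pa m * (1 - (PowerSeries.X : PowerSeries ℚ) ^ (m + 1))⁻¹ :=
  Finset.prod_range_succ _ _

lemma pa_succ_rel (m : ℕ) :
    (1 - (PowerSeries.X : PowerSeries ℚ) ^ (m + 1)) * pa (m + 1) = pa m := by
  rw [pa_succ, mul_comm (pa m), ← mul_assoc, factor_mul_inv, one_mul]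

/-- Gaussian binomial coefficient (as a power series over ℚ), via the q-Pascal rule. -/
noncomputable def gb : ℕ → ℕ → PowerSeries ℚ
  | 0, 0 => 1
  | 0, _ + 1 => 0
  | _ + 1, 0 => 1
  | m + 1, d + 1 => gb m (d + 1) + PowerSeries.X ^ (m - d) * gb m d

lemma gb_zero_right (m : ℕ) : gb m 0 = 1 := by cases m <;> rfl

lemma gb_eq_zero : ∀ m d, m < d → gb m d = 0 := by
  intro m
  induction m with
  | zero => intro d hd; match d, hd with | d + 1, _ => rfl
  | succ m ih =>
    intro d hd
    match d, hd with
    | d + 1, hd =>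
      show gb m (d + 1) + PowerSeries.X ^ (m - d) * gb m d = 0
      rw [ih (d + 1) (by omega), ih d (by omega), mul_zero, add_zero]

lemma gb_diag : ∀ m, gb m m = 1 := by
  intro m
  induction m with
  | zero => rfl
  | succ m ih =>
    show gb m (m + 1) + PowerSeries.X ^ (m - m) * gb m m = 1
    rw [gb_eq_zero m (m + 1) (by omega), ih, Nat.sub_self, pow_zero, one_mul, zero_add]

/-- Closed form of the Gaussian binomial: `gb m d * (x)_d * (x)_{m-d} = (x)_m`. -/
lemma gb_closed : ∀ m d, d ≤ m → gb m d * pq d * pq (m - d) = pq m := by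
  intro m
  induction m with
  | zero =>
    intro d hd
    interval_cases d
    simp [gb, pq]
  | succ m ih =>
    intro d hd
    match d with
    | 0 => simp [gb_zero_right, pq]
    | d + 1 =>
      rcases Nat.lt_or_ge d m with hdm | hdm
      · -- d + 1 ≤ m
        obtain ⟨c, hc⟩ : ∃ c, m = d + 1 + c := ⟨m - d - 1, by omega⟩
        subst hc
        show (gb (d + 1 + c) (d + 1) + PowerSeries.X ^ (d + 1 + c - d) * gb (d + 1 + c) d) *
            pq (d + 1) * pq (d + 1 + c + 1 - (d + 1)) = pq (d + 1 + c + 1)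
        have h1 := ih (d + 1) (by omega)
        have h2 := ih d (by omega)
        rw [show d + 1 + c - (d + 1) = c from by omega] at h1
        rw [show d + 1 + c - d = c + 1 from by omega] at h2 ⊢
        rw [show d + 1 + c + 1 - (d + 1) = c + 1 from by omega]
        rw [pq_succ c] at h2 ⊢
        rw [pq_succ (d + 1 + c), pq_succ d] at *
        have h6 : (PowerSeries.X : PowerSeries ℚ) ^ (c + 1) *
            (PowerSeries.X : PowerSeries ℚ) ^ (d + 1) =
            (PowerSeries.X : PowerSeries ℚ) ^ (d + 1 + c + 1) := by
          rw [← pow_add]; congr 1; omega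
        linear_combination (1 - (PowerSeries.X : PowerSeries ℚ) ^ (c + 1)) * h1 +
          (PowerSeries.X : PowerSeries ℚ) ^ (c + 1) *
            (1 - (PowerSeries.X : PowerSeries ℚ) ^ (d + 1)) * h2 - pq (d + 1 + c) * h6
      · -- d = m
        have hdm' : d = m := by omega
        subst hdm'
        rw [gb_diag, Nat.sub_self]
        show 1 * pq (d + 1) * pq 0 = pq (d + 1)
        simp [pq]

/-- Key identity: `∑_{e=0}^m x^{e²+je} [m e] a_{e+j} = a_{m+j}`. -/
lemma key : ∀ m j : ℕ,
    ∑ e ∈ Finset.range (m + 1),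
      (PowerSeries.X : PowerSeries ℚ) ^ (e ^ 2 + j * e) * gb m e * pa (e + j) = pa (m + j) := by
  intro m
  induction m with
  | zero =>
    intro j
    simp [gb_zero_right]
  | succ m ih =>
    intro j
    rw [Finset.sum_range_succ' (fun e =>
      (PowerSeries.X : PowerSeries ℚ) ^ (e ^ 2 + j * e) * gb (m + 1) e * pa (e + j)) (m + 1)]
    have hsplit : ∀ e ∈ Finset.range (m + 1),
        (PowerSeries.X : PowerSeries ℚ) ^ ((e+1) ^ 2 + j * (e+1)) * gb (m + 1) (e+1) *
            pa (e + 1 + j)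
          = (PowerSeries.X : PowerSeries ℚ) ^ ((e+1) ^ 2 + j * (e+1)) * gb m (e+1) *
              pa (e + 1 + j)
            + (PowerSeries.X : PowerSeries ℚ) ^ (m + j + 1) *
              ((PowerSeries.X : PowerSeries ℚ) ^ (e ^ 2 + (j+1) * e) * gb m e *
                pa (e + (j + 1))) := by
      intro e he
      rw [Finset.mem_range] at he
      show (PowerSeries.X : PowerSeries ℚ) ^ ((e+1) ^ 2 + j * (e+1)) *
          (gb m (e + 1) + PowerSeries.X ^ (m - e) * gb m e) * pa (e + 1 + j) = _
      have h1 : (e+1) ^ 2 + j * (e+1) + (m - e) = (e ^ 2 + (j+1) * e) + (m + j + 1) := by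
        obtain ⟨c, hc⟩ : ∃ c, m = e + c := ⟨m - e, by omega⟩
        subst hc
        rw [Nat.add_sub_cancel_left]
        ring
      have h2 : e + 1 + j = e + (j + 1) := by omega
      rw [mul_add, add_mul, h2]
      congr 1
      rw [← mul_assoc ((PowerSeries.X : PowerSeries ℚ) ^ ((e+1) ^ 2 + j * (e+1))),
        ← pow_add, h1, pow_add]
      ring
    rw [Finset.sum_congr rfl hsplit, Finset.sum_add_distrib, ← Finset.mul_sum, ih (j + 1)]
    have hfirst :
        (∑ e ∈ Finset.range (m + 1),
          (PowerSeries.X : PowerSeries ℚ) ^ ((e+1) ^ 2 + j * (e+1)) * gb m (e+1) *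
            pa (e + 1 + j))
          + (PowerSeries.X : PowerSeries ℚ) ^ (0 ^ 2 + j * 0) * gb (m + 1) 0 * pa (0 + j)
          = pa (m + j) := by
      have h7 : (∑ e ∈ Finset.range (m + 1),
            (PowerSeries.X : PowerSeries ℚ) ^ ((e + 1) ^ 2 + j * (e + 1)) * gb m (e + 1) *
              pa (e + 1 + j))
            + (PowerSeries.X : PowerSeries ℚ) ^ (0 ^ 2 + j * 0) * gb m 0 * pa (0 + j)
          = ∑ e ∈ Finset.range (m + 1 + 1),
              (PowerSeries.X : PowerSeries ℚ) ^ (e ^ 2 + j * e) * gb m e * pa (e + j) :=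
        (Finset.sum_range_succ' (fun e =>
          (PowerSeries.X : PowerSeries ℚ) ^ (e ^ 2 + j * e) * gb m e * pa (e + j)) (m + 1)).symm
      have h8 : (∑ e ∈ Finset.range (m + 1 + 1),
            (PowerSeries.X : PowerSeries ℚ) ^ (e ^ 2 + j * e) * gb m e * pa (e + j))
          = (∑ e ∈ Finset.range (m + 1),
              (PowerSeries.X : PowerSeries ℚ) ^ (e ^ 2 + j * e) * gb m e * pa (e + j))
            + (PowerSeries.X : PowerSeries ℚ) ^ ((m + 1) ^ 2 + j * (m + 1)) * gb m (m + 1) *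
              pa (m + 1 + j) :=
        Finset.sum_range_succ _ _
      rw [gb_zero_right] at h7 ⊢
      rw [h7, h8, gb_eq_zero m (m + 1) (by omega), mul_zero, zero_mul, add_zero]
      exact ih j
    rw [add_right_comm, hfirst]
    have h3 : m + (j + 1) = m + j + 1 := by omega
    have h4 : m + 1 + j = m + j + 1 := by omega
    rw [h3, h4, ← pa_succ_rel (m + j)]
    ring

/-- The tail product `∏_{k<e} (1 - x^{c+k+1})` is `1 + x^{c+1}·s`. -/
lemma prod_shift (c : ℕ) : ∀ e : ℕ, ∃ s : PowerSeries ℚ,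
    ∏ k ∈ Finset.range e, (1 - (PowerSeries.X : PowerSeries ℚ) ^ (c + k + 1)) =
      1 + (PowerSeries.X : PowerSeries ℚ) ^ (c + 1) * s := by
  intro e
  induction e with
  | zero => exact ⟨0, by simp⟩
  | succ e ih =>
    obtain ⟨s, hs⟩ := ih
    refine ⟨s - (PowerSeries.X : PowerSeries ℚ) ^ e -
      s * (PowerSeries.X : PowerSeries ℚ) ^ (c + e + 1), ?_⟩
    rw [Finset.prod_range_succ, hs,
      show c + e + 1 = (c + 1) + e from by omega, pow_add]
    ring

end DurfeeAux

theorem durfee_square_identity (n : ℕ) :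
    (PowerSeries.coeff (R := ℚ) n)
        (∏ k ∈ Finset.range (n + 1), (1 - (PowerSeries.X : PowerSeries ℚ) ^ (k + 1))⁻¹) =
      (PowerSeries.coeff (R := ℚ) n)
        (∑ d ∈ Finset.range (n + 1),
          (PowerSeries.X : PowerSeries ℚ) ^ (d ^ 2) *
            (∏ k ∈ Finset.range d, (1 - (PowerSeries.X : PowerSeries ℚ) ^ (k + 1))⁻¹) ^ 2) := by
  classical
  have hkey := DurfeeAux.key (n + 1) 0
  simp only [Nat.zero_mul, zero_mul, Nat.add_zero, add_zero] at hkey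
  rw [Finset.sum_range_succ] at hkey
  have hL : (∏ k ∈ Finset.range (n + 1),
      (1 - (PowerSeries.X : PowerSeries ℚ) ^ (k + 1))⁻¹) = DurfeeAux.pa (n + 1) := rfl
  rw [hL, ← hkey, map_add, map_sum, map_sum]
  have hsq1 : n + 1 ≤ (n + 1) ^ 2 := Nat.le_self_pow two_ne_zero _
  have hlast : (PowerSeries.coeff (R := ℚ) n)
      ((PowerSeries.X : PowerSeries ℚ) ^ ((n + 1) ^ 2) * DurfeeAux.gb (n + 1) (n + 1) *
        DurfeeAux.pa (n + 1)) = 0 := by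
    rw [mul_assoc, mul_comm, PowerSeries.coeff_mul_X_pow', if_neg (by omega)]
  rw [hlast, add_zero]
  apply Finset.sum_congr rfl
  intro e he
  rw [Finset.mem_range] at he
  have hpa2 : (∏ k ∈ Finset.range e,
      (1 - (PowerSeries.X : PowerSeries ℚ) ^ (k + 1))⁻¹) = DurfeeAux.pa e := rfl
  rw [hpa2]
  obtain ⟨s, hs⟩ := DurfeeAux.prod_shift (n + 1 - e) e
  -- pq (n+1) = pq (n+1-e) * R
  have hprod : DurfeeAux.pq (n + 1) = DurfeeAux.pq (n + 1 - e) *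
      ∏ k ∈ Finset.range e,
        (1 - (PowerSeries.X : PowerSeries ℚ) ^ ((n + 1 - e) + k + 1)) := by
    have h := Finset.prod_range_add
      (fun k => (1 - (PowerSeries.X : PowerSeries ℚ) ^ (k + 1))) (n + 1 - e) e
    rw [show (n + 1 - e) + e = n + 1 from by omega] at h
    exact h
  have hclosed := DurfeeAux.gb_closed (n + 1) e (by omega)
  have h1 : DurfeeAux.pq (n + 1 - e) * (DurfeeAux.gb (n + 1) e * DurfeeAux.pq e) =
      DurfeeAux.pq (n + 1 - e) *
        ∏ k ∈ Finset.range e,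
          (1 - (PowerSeries.X : PowerSeries ℚ) ^ ((n + 1 - e) + k + 1)) := by
    rw [← hprod, ← hclosed]; ring
  have h2 := mul_left_cancel₀ (DurfeeAux.pq_ne_zero (n + 1 - e)) h1
  have hgb : DurfeeAux.gb (n + 1) e =
      (1 + (PowerSeries.X : PowerSeries ℚ) ^ ((n + 1 - e) + 1) * s) * DurfeeAux.pa e := by
    calc DurfeeAux.gb (n + 1) e
        = DurfeeAux.gb (n + 1) e * (DurfeeAux.pq e * DurfeeAux.pa e) := by
          rw [DurfeeAux.pq_mul_pa, mul_one]
      _ = (DurfeeAux.gb (n + 1) e * DurfeeAux.pq e) * DurfeeAux.pa e := by ring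
      _ = (1 + (PowerSeries.X : PowerSeries ℚ) ^ ((n + 1 - e) + 1) * s) * DurfeeAux.pa e := by
          rw [h2, hs]
  rw [hgb]
  have expand : (PowerSeries.X : PowerSeries ℚ) ^ (e ^ 2) *
        ((1 + (PowerSeries.X : PowerSeries ℚ) ^ ((n + 1 - e) + 1) * s) * DurfeeAux.pa e) *
        DurfeeAux.pa e
      = (PowerSeries.X : PowerSeries ℚ) ^ (e ^ 2) * DurfeeAux.pa e ^ 2 +
        (DurfeeAux.pa e ^ 2 * s) *
          (PowerSeries.X : PowerSeries ℚ) ^ (e ^ 2 + ((n + 1 - e) + 1)) := by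
    rw [pow_add]
    ring
  rw [expand, map_add]
  have hsq2 : e ≤ e ^ 2 := Nat.le_self_pow two_ne_zero _
  rw [PowerSeries.coeff_mul_X_pow', if_neg (by omega), add_zero]
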